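/- Let p be a prime and n a positive integer. If A ⊆ ℤ_p × ℤ_{p^n} is a tiling set (i.e., A tiles ℤ_p × ℤ_{p^n}) and |A| = p, then A is a spectral set. -/

import Mathlib

open Complex Pointwise

/-- The inner product on `ℤ_p × ℤ_{p^n}`: `⟨u,v⟩ = p^(n-1)·u₁·v₁ + u₂·v₂` in `ℤ_{p^n}`. -/
def inn (p n : ℕ) (u v : ZMod p × ZMod (p ^ n)) : ZMod (p ^ n) :=
  (p : ZMod (p ^ n)) ^ (n - 1) * (u.1.val : ZMod (p ^ n)) * (v.1.val : ZMod (p ^ n)) +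
    u.2 * v.2

/-- The character `χ_g(h) = e^(2πi⟨g,h⟩/p^n)`. -/
noncomputable def chi (p n : ℕ) (g h : ZMod p × ZMod (p ^ n)) : ℂ :=
  Complex.exp (2 * Real.pi * Complex.I * ((inn p n g h).val : ℂ) / ((p : ℂ) ^ n))

/-- `χ_g(A) = Σ_{a ∈ A} χ_g(a)`. -/
noncomputable def chiSum (p n : ℕ) (g : ZMod p × ZMod (p ^ n))
    (A : Finset (ZMod p × ZMod (p ^ n))) : ℂ :=
  ∑ a ∈ A, chi p n g a

/-- The zero set `Z_A = {g : χ_g(A) = 0}`. -/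
def zeroSet (p n : ℕ) (A : Finset (ZMod p × ZMod (p ^ n))) :
    Set (ZMod p × ZMod (p ^ n)) :=
  {g | chiSum p n g A = 0}

/-- `(A,B)` is a spectral pair: `|A| = |B|` and `χ_{b-b'}(A) = 0` for distinct `b,b' ∈ B`. -/
def SpectralPair (p n : ℕ) (A B : Finset (ZMod p × ZMod (p ^ n))) : Prop :=
  A.card = B.card ∧ ∀ b ∈ B, ∀ b' ∈ B, b ≠ b' → chiSum p n (b - b') A = 0

/-- `A` is a spectral set: some `B` makes `(A,B)` a spectral pair. -/
def SpectralSet (p n : ℕ) (A : Finset (ZMod p × ZMod (p ^ n))) : Prop :=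
  ∃ B : Finset (ZMod p × ZMod (p ^ n)), SpectralPair p n A B

/-- `(A,T)` is a tiling pair: every `g` has a unique representation `g = a + t`, `a ∈ A`, `t ∈ T`. -/
def TilingPair (p n : ℕ) (A T : Finset (ZMod p × ZMod (p ^ n))) : Prop :=
  ∀ g : ZMod p × ZMod (p ^ n),
    ∃! x : (ZMod p × ZMod (p ^ n)) × (ZMod p × ZMod (p ^ n)),
      x.1 ∈ A ∧ x.2 ∈ T ∧ g = x.1 + x.2

/-- `A` tiles `ℤ_p × ℤ_{p^n}` by translation. -/
def Tiles (p n : ℕ) (A : Finset (ZMod p × ZMod (p ^ n))) : Prop :=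
  ∃ T : Finset (ZMod p × ZMod (p ^ n)), TilingPair p n A T


section Aux

open Polynomial Finset

/-- The canonical primitive `p^n`-th root of unity. -/
noncomputable def zet (p n : ℕ) : ℂ :=
  Complex.exp (2 * Real.pi * Complex.I / ((p ^ n : ℕ) : ℂ))

lemma zet_prim (p n : ℕ) (hp : p.Prime) : IsPrimitiveRoot (zet p n) (p ^ n) :=
  Complex.isPrimitiveRoot_exp _ (pow_ne_zero n hp.ne_zero)

lemma chi_eq (p n : ℕ) (hp : p.Prime) (g h : ZMod p × ZMod (p ^ n)) :
    chi p n g h = zet p n ^ (inn p n g h).val := by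
  have hpn : ((p : ℂ)) ^ n ≠ 0 := pow_ne_zero _ (Nat.cast_ne_zero.mpr hp.ne_zero)
  rw [zet, ← Complex.exp_nat_mul, chi]
  congr 1
  push_cast
  ring

lemma zet_pow_congr (p n : ℕ) (hp : p.Prime) {x y : ℕ} (h : x % p ^ n = y % p ^ n) :
    zet p n ^ x = zet p n ^ y := by
  have hz : zet p n ^ (p ^ n) = 1 := (zet_prim p n hp).pow_eq_one
  conv_lhs => rw [← Nat.div_add_mod x (p ^ n)]
  conv_rhs => rw [← Nat.div_add_mod y (p ^ n)]
  rw [pow_add, pow_add, pow_mul, pow_mul, hz, one_pow, one_pow, one_mul, one_mul, h]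

lemma pmul_cast (p n : ℕ) (hp : p.Prime) (hn : 1 ≤ n) {c c' : ℕ} (h : c % p = c' % p) :
    (p : ZMod (p ^ n)) ^ (n - 1) * (c : ZMod (p ^ n)) =
      (p : ZMod (p ^ n)) ^ (n - 1) * (c' : ZMod (p ^ n)) := by
  have hpn : (p : ZMod (p ^ n)) ^ (n - 1) * (p : ZMod (p ^ n)) = 0 := by
    rw [← pow_succ, Nat.sub_add_cancel hn, ← Nat.cast_pow, ZMod.natCast_self]
  have key : ∀ c : ℕ, (p : ZMod (p ^ n)) ^ (n - 1) * (c : ZMod (p ^ n)) =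
      (p : ZMod (p ^ n)) ^ (n - 1) * ((c % p : ℕ) : ZMod (p ^ n)) := by
    intro c
    conv_lhs => rw [← Nat.div_add_mod c p]
    push_cast
    rw [mul_add, ← mul_assoc, hpn, zero_mul, zero_add]
  rw [key c, key c', h]

lemma inn_symm (p n : ℕ) (u v : ZMod p × ZMod (p ^ n)) :
    inn p n u v = inn p n v u := by
  unfold inn; ring

lemma inn_add_left (p n : ℕ) (hp : p.Prime) (hn : 1 ≤ n) (u u' v : ZMod p × ZMod (p ^ n)) :
    inn p n (u + u') v = inn p n u v + inn p n u' v := by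
  haveI : NeZero p := ⟨hp.ne_zero⟩
  unfold inn
  simp only [Prod.fst_add, Prod.snd_add]
  have h : (p : ZMod (p ^ n)) ^ (n - 1) * (((u.1 + u'.1).val : ℕ) : ZMod (p ^ n)) =
      (p : ZMod (p ^ n)) ^ (n - 1) * ((u.1.val + u'.1.val : ℕ) : ZMod (p ^ n)) := by
    apply pmul_cast p n hp hn
    rw [ZMod.val_add]
    exact Nat.mod_mod_of_dvd _ dvd_rfl
  rw [h]
  push_cast
  ring

lemma inn_zero_left (p n : ℕ) (hp : p.Prime) (v : ZMod p × ZMod (p ^ n)) :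
    inn p n 0 v = 0 := by
  haveI : NeZero p := ⟨hp.ne_zero⟩
  simp [inn]

lemma inn_nsmul (p n : ℕ) (hp : p.Prime) (hn : 1 ≤ n) (m : ℕ) (g v : ZMod p × ZMod (p ^ n)) :
    inn p n (m • g) v = (m : ZMod (p ^ n)) * inn p n g v := by
  induction m with
  | zero => simp [inn_zero_left p n hp]
  | succ m ih =>
      rw [succ_nsmul, inn_add_left p n hp hn, ih]
      push_cast
      ring

lemma chi_add_right (p n : ℕ) (hp : p.Prime) (hn : 1 ≤ n) (g h h' : ZMod p × ZMod (p ^ n)) :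
    chi p n g (h + h') = chi p n g h * chi p n g h' := by
  haveI : NeZero (p ^ n) := ⟨pow_ne_zero n hp.ne_zero⟩
  have e : inn p n g (h + h') = inn p n g h + inn p n g h' := by
    rw [inn_symm, inn_add_left p n hp hn, inn_symm p n h g, inn_symm p n h' g]
  rw [chi_eq p n hp, chi_eq p n hp, chi_eq p n hp, ← pow_add, e]
  apply zet_pow_congr p n hp
  rw [ZMod.val_add]
  exact Nat.mod_mod_of_dvd _ dvd_rfl

lemma chi_symm (p n : ℕ) (g h : ZMod p × ZMod (p ^ n)) :
    chi p n g h = chi p n h g := by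
  unfold chi
  rw [inn_symm]

lemma chi_zero_left (p n : ℕ) (hp : p.Prime) (h : ZMod p × ZMod (p ^ n)) :
    chi p n 0 h = 1 := by
  haveI : NeZero (p ^ n) := ⟨pow_ne_zero n hp.ne_zero⟩
  rw [chi_eq p n hp, inn_zero_left p n hp, ZMod.val_zero, pow_zero]

lemma sum_pow_val {M : ℕ} [NeZero M] (ω : ℂ) :
    ∑ x : ZMod M, ω ^ x.val = ∑ j ∈ Finset.range M, ω ^ j := by
  apply Finset.sum_bij (fun x _ => x.val)
  · intro a _
    exact Finset.mem_range.mpr (ZMod.val_lt a)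
  · intro a _ b _ h
    exact ZMod.val_injective M h
  · intro b hb
    exact ⟨(b : ZMod M), Finset.mem_univ _, ZMod.val_cast_of_lt (Finset.mem_range.mp hb)⟩
  · intro a _
    rfl

lemma geom_zero {ω : ℂ} {N : ℕ} (h1 : ω ≠ 1) (hN : ω ^ N = 1) :
    ∑ j ∈ Finset.range N, ω ^ j = 0 := by
  rw [geom_sum_eq h1, hN, sub_self, zero_div]

lemma charSum_eq_zero (p n : ℕ) [NeZero p] [NeZero (p ^ n)] (hp : p.Prime) (hn : 1 ≤ n)
    {d : ZMod p × ZMod (p ^ n)} (hd : d ≠ 0) :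
    ∑ h : ZMod p × ZMod (p ^ n), chi p n d h = 0 := by
  have hsplit : ∀ h : ZMod p × ZMod (p ^ n),
      chi p n d h = chi p n d (h.1, 0) * chi p n d (0, h.2) := by
    intro h
    rw [← chi_add_right p n hp hn]
    congr 1
    ext <;> simp
  rw [Fintype.sum_prod_type]
  have step : ∀ h₁ : ZMod p, ∑ h₂ : ZMod (p ^ n), chi p n d (h₁, h₂) =
      chi p n d (h₁, 0) * ∑ h₂ : ZMod (p ^ n), chi p n d (0, h₂) := by
    intro h₁
    rw [Finset.mul_sum]
    exact Finset.sum_congr rfl fun h₂ _ => hsplit (h₁, h₂)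
  rw [Finset.sum_congr rfl fun h₁ _ => step h₁, ← Finset.sum_mul]
  rcases em (d.2 = 0) with h2 | h2
  · have hd1 : d.1 ≠ 0 := by
      intro h1
      exact hd (Prod.ext h1 h2)
    have hfac : ∑ h₁ : ZMod p, chi p n d (h₁, 0) = 0 := by
      have e : ∀ h₁ : ZMod p, chi p n d (h₁, 0) =
          (zet p n ^ (p ^ (n - 1) * d.1.val)) ^ h₁.val := by
        intro h₁
        rw [chi_eq p n hp, ← pow_mul]
        apply zet_pow_congr p n hp
        have einn : inn p n d (h₁, 0) =
            ((p ^ (n - 1) * d.1.val * h₁.val : ℕ) : ZMod (p ^ n)) := by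
          unfold inn
          push_cast
          ring
        rw [einn, ZMod.val_natCast]
        exact Nat.mod_mod_of_dvd _ dvd_rfl
      rw [Finset.sum_congr rfl fun h₁ _ => e h₁, sum_pow_val]
      apply geom_zero
      · apply (zet_prim p n hp).pow_ne_one_of_pos_of_lt
        · exact (Nat.mul_pos (pow_pos hp.pos _) (ZMod.val_pos.mpr hd1)).ne'
        · calc p ^ (n - 1) * d.1.val < p ^ (n - 1) * p :=
                mul_lt_mul_of_pos_left (ZMod.val_lt d.1) (pow_pos hp.pos _)
            _ = p ^ n := by rw [← pow_succ, Nat.sub_add_cancel hn]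
      · rw [← pow_mul, show p ^ (n - 1) * d.1.val * p = p ^ n * d.1.val by
          rw [mul_right_comm, ← pow_succ, Nat.sub_add_cancel hn],
          pow_mul, (zet_prim p n hp).pow_eq_one, one_pow]
    rw [hfac, zero_mul]
  · have hfac : ∑ h₂ : ZMod (p ^ n), chi p n d (0, h₂) = 0 := by
      have e : ∀ h₂ : ZMod (p ^ n), chi p n d (0, h₂) = (zet p n ^ d.2.val) ^ h₂.val := by
        intro h₂
        rw [chi_eq p n hp, ← pow_mul]
        apply zet_pow_congr p n hp
        have einn : inn p n d (0, h₂) = d.2 * h₂ := by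
          unfold inn
          simp
        rw [einn, ZMod.val_mul]
        exact Nat.mod_mod_of_dvd _ dvd_rfl
      rw [Finset.sum_congr rfl fun h₂ _ => e h₂, sum_pow_val]
      apply geom_zero
      · exact (zet_prim p n hp).pow_ne_one_of_pos_of_lt (ZMod.val_pos.mpr h2).ne' (ZMod.val_lt _)
      · rw [← pow_mul, mul_comm, pow_mul, (zet_prim p n hp).pow_eq_one, one_pow]
    rw [hfac, mul_zero]

lemma tiling_sum (p n : ℕ) [NeZero p] [NeZero (p ^ n)] {A T : Finset (ZMod p × ZMod (p ^ n))}
    (hT : TilingPair p n A T) (f : ZMod p × ZMod (p ^ n) → ℂ) :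
    ∑ x ∈ A ×ˢ T, f (x.1 + x.2) = ∑ h : ZMod p × ZMod (p ^ n), f h := by
  apply Finset.sum_bij (fun x _ => x.1 + x.2)
  · intro a _
    exact Finset.mem_univ _
  · intro x hx y hy hxy
    obtain ⟨w, _, hu⟩ := hT (x.1 + x.2)
    have hx' := Finset.mem_product.mp hx
    have hy' := Finset.mem_product.mp hy
    have e1 : x = w := hu x ⟨hx'.1, hx'.2, rfl⟩
    have e2 : y = w := hu y ⟨hy'.1, hy'.2, hxy⟩
    rw [e1, e2]
  · intro b _
    obtain ⟨w, ⟨h1, h2, h3⟩, _⟩ := hT b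
    exact ⟨w, Finset.mem_product.mpr ⟨h1, h2⟩, h3.symm⟩
  · intro a _
    rfl

lemma tiling_card (p n : ℕ) [NeZero p] [NeZero (p ^ n)] (hp : p.Prime)
    {A T : Finset (ZMod p × ZMod (p ^ n))}
    (hT : TilingPair p n A T) : A.card * T.card = p ^ (n + 1) := by
  have h : (A ×ˢ T).card = (Finset.univ : Finset (ZMod p × ZMod (p ^ n))).card := by
    apply Finset.card_bij (fun x _ => x.1 + x.2)
    · intro a _
      exact Finset.mem_univ _
    · intro x hx y hy hxy
      obtain ⟨w, _, hu⟩ := hT (x.1 + x.2)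
      have hx' := Finset.mem_product.mp hx
      have hy' := Finset.mem_product.mp hy
      have e1 : x = w := hu x ⟨hx'.1, hx'.2, rfl⟩
      have e2 : y = w := hu y ⟨hy'.1, hy'.2, hxy⟩
      rw [e1, e2]
    · intro b _
      obtain ⟨w, ⟨h1, h2, h3⟩, _⟩ := hT b
      exact ⟨w, Finset.mem_product.mpr ⟨h1, h2⟩, h3.symm⟩
  rw [Finset.card_product, Finset.card_univ, Fintype.card_prod, ZMod.card, ZMod.card] at h
  rw [h, pow_succ, mul_comm]

lemma chiSum_mul_eq_zero (p n : ℕ) [NeZero p] [NeZero (p ^ n)] (hp : p.Prime) (hn : 1 ≤ n)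
    {A T : Finset (ZMod p × ZMod (p ^ n))} (hT : TilingPair p n A T)
    {g : ZMod p × ZMod (p ^ n)} (hg : g ≠ 0) :
    chiSum p n g A * chiSum p n g T = 0 := by
  have h1 : ∑ x ∈ A ×ˢ T, chi p n g (x.1 + x.2) = 0 := by
    rw [tiling_sum p n hT]
    exact charSum_eq_zero p n hp hn hg
  rw [chiSum, chiSum, Finset.sum_mul_sum]
  rw [Finset.sum_product] at h1
  rw [← h1]
  refine Finset.sum_congr rfl fun a _ => Finset.sum_congr rfl fun t _ => ?_
  rw [← chi_add_right p n hp hn]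

lemma exists_chiSum_zero (p n : ℕ) (hp : p.Prime) (hn : 1 ≤ n)
    (A : Finset (ZMod p × ZMod (p ^ n))) (hA : Tiles p n A) (hcard : A.card = p) :
    ∃ g : ZMod p × ZMod (p ^ n), g ≠ 0 ∧ chiSum p n g A = 0 := by
  haveI : NeZero p := ⟨hp.ne_zero⟩
  haveI : NeZero (p ^ n) := ⟨pow_ne_zero n hp.ne_zero⟩
  obtain ⟨T, hT⟩ := hA
  by_contra hcon
  push_neg at hcon
  have hTzero : ∀ g : ZMod p × ZMod (p ^ n), g ≠ 0 → chiSum p n g T = 0 := by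
    intro g hg
    rcases mul_eq_zero.mp (chiSum_mul_eq_zero p n hp hn hT hg) with h | h
    · exact absurd h (hcon g hg)
    · exact h
  have hTcard : T.card = p ^ n := by
    have h := tiling_card p n hp hT
    rw [hcard] at h
    have h2 : p * T.card = p * p ^ n := by
      rw [h, pow_succ, mul_comm]
    exact Nat.eq_of_mul_eq_mul_left hp.pos h2
  obtain ⟨h₀, hh₀⟩ : ∃ h₀ : ZMod p × ZMod (p ^ n), h₀ ∉ T := by
    by_contra hc
    push_neg at hc
    have : T = Finset.univ := Finset.eq_univ_iff_forall.mpr hc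
    rw [this, Finset.card_univ, Fintype.card_prod, ZMod.card, ZMod.card] at hTcard
    have hpn : 0 < p ^ n := pow_pos hp.pos n
    nlinarith [hp.two_le]
  have S1 : ∑ g : ZMod p × ZMod (p ^ n), ∑ t ∈ T, chi p n g (t - h₀) = 0 := by
    rw [Finset.sum_comm]
    apply Finset.sum_eq_zero
    intro t ht
    have hne : t - h₀ ≠ 0 := sub_ne_zero.mpr fun e => hh₀ (e ▸ ht)
    calc ∑ g : ZMod p × ZMod (p ^ n), chi p n g (t - h₀)
        = ∑ g : ZMod p × ZMod (p ^ n), chi p n (t - h₀) g :=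
          Finset.sum_congr rfl fun g _ => chi_symm p n g (t - h₀)
      _ = 0 := charSum_eq_zero p n hp hn hne
  have S2 : ∑ g : ZMod p × ZMod (p ^ n), ∑ t ∈ T, chi p n g (t - h₀) = (T.card : ℂ) := by
    have inner : ∀ g : ZMod p × ZMod (p ^ n),
        ∑ t ∈ T, chi p n g (t - h₀) = chiSum p n g T * chi p n g (-h₀) := by
      intro g
      rw [chiSum, Finset.sum_mul]
      refine Finset.sum_congr rfl fun t _ => ?_
      rw [← chi_add_right p n hp hn, sub_eq_add_neg]
    rw [Finset.sum_congr rfl fun g _ => inner g]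
    rw [Finset.sum_eq_single_of_mem (0 : ZMod p × ZMod (p ^ n)) (Finset.mem_univ _)]
    · have c1 : chi p n (0 : ZMod p × ZMod (p ^ n)) (-h₀) = 1 := chi_zero_left p n hp _
      have c2 : chiSum p n (0 : ZMod p × ZMod (p ^ n)) T = (T.card : ℂ) := by
        rw [chiSum, Finset.sum_congr rfl fun t _ => chi_zero_left p n hp t]
        simp
      rw [c1, c2, mul_one]
    · intro g _ hg
      rw [hTzero g hg, zero_mul]
  rw [S1] at S2
  have hTne : (T.card : ℂ) ≠ 0 := by
    rw [hTcard]
    exact_mod_cast pow_ne_zero n (Nat.cast_ne_zero.mpr hp.ne_zero : (p : ℂ) ≠ 0)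
  exact hTne S2.symm

lemma chiSum_nsmul_eq_zero (p n : ℕ) (hp : p.Prime) (hn : 1 ≤ n)
    (A : Finset (ZMod p × ZMod (p ^ n))) (g : ZMod p × ZMod (p ^ n))
    (hz : chiSum p n g A = 0) (m : ℕ) (hm : ¬ p ∣ m) :
    chiSum p n (m • g) A = 0 := by
  haveI : NeZero p := ⟨hp.ne_zero⟩
  haveI : NeZero (p ^ n) := ⟨pow_ne_zero n hp.ne_zero⟩
  have hNpos : 0 < p ^ n := pow_pos hp.pos n
  have hζ : IsPrimitiveRoot (zet p n) (p ^ n) := zet_prim p n hp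
  set P : Polynomial ℚ := ∑ a ∈ A, Polynomial.X ^ (inn p n g a).val with hP
  have hPζ : (Polynomial.aeval (zet p n)) P = 0 := by
    rw [hP, map_sum]
    simp only [map_pow, Polynomial.aeval_X]
    rw [← hz, chiSum]
    exact Finset.sum_congr rfl fun a _ => (chi_eq p n hp g a).symm
  obtain ⟨Q, hQ⟩ := minpoly.dvd ℚ (zet p n) hPζ
  have hcop : m.Coprime (p ^ n) :=
    Nat.Coprime.pow_right _ ((hp.coprime_iff_not_dvd.mpr hm).symm)
  have hζm : IsPrimitiveRoot (zet p n ^ m) (p ^ n) := hζ.pow_of_coprime m hcop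
  have hmin : minpoly ℚ (zet p n) = Polynomial.cyclotomic (p ^ n) ℚ :=
    (Polynomial.cyclotomic_eq_minpoly_rat hζ hNpos).symm
  have hroot : (Polynomial.aeval (zet p n ^ m)) (minpoly ℚ (zet p n)) = 0 := by
    rw [hmin, Polynomial.aeval_def, ← Polynomial.eval_map, Polynomial.map_cyclotomic]
    exact hζm.isRoot_cyclotomic hNpos
  have hPζm : (Polynomial.aeval (zet p n ^ m)) P = 0 := by
    rw [hQ, map_mul, hroot, zero_mul]
  have hPval : (Polynomial.aeval (zet p n ^ m)) P =
      ∑ a ∈ A, (zet p n ^ m) ^ (inn p n g a).val := by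
    rw [hP, map_sum]
    simp only [map_pow, Polynomial.aeval_X]
  rw [chiSum]
  have key : ∀ a ∈ A, chi p n (m • g) a = (zet p n ^ m) ^ (inn p n g a).val := by
    intro a _
    rw [chi_eq p n hp, ← pow_mul]
    apply zet_pow_congr p n hp
    rw [inn_nsmul p n hp hn, ZMod.val_mul, ZMod.val_natCast]
    rw [Nat.mod_mod_of_dvd _ dvd_rfl]
    conv_rhs => rw [Nat.mul_mod, ← Nat.mod_eq_of_lt (ZMod.val_lt (inn p n g a)), Nat.mod_mod_of_dvd _ dvd_rfl, ← Nat.mul_mod]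
    rw [Nat.mul_mod, Nat.mod_mod_of_dvd _ dvd_rfl, ← Nat.mul_mod]
  rw [Finset.sum_congr rfl key, ← hPval, hPζm]

lemma nsmul_fst {M N : Type*} [AddMonoid M] [AddMonoid N] (j : ℕ) (g : M × N) :
    (j • g).1 = j • g.1 := by
  induction j with
  | zero => simp
  | succ j ih => rw [succ_nsmul, succ_nsmul, Prod.fst_add, ih]

lemma nsmul_snd {M N : Type*} [AddMonoid M] [AddMonoid N] (j : ℕ) (g : M × N) :
    (j • g).2 = j • g.2 := by
  induction j with
  | zero => simp
  | succ j ih => rw [succ_nsmul, succ_nsmul, Prod.snd_add, ih]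

end Aux

/-- A tile of size `p` is a spectral set. -/
theorem spectral_of_tile_card_p (p n : ℕ) (hp : p.Prime) (hn : 1 ≤ n)
    (A : Finset (ZMod p × ZMod (p ^ n))) (hA : Tiles p n A) (hcard : A.card = p) :
    SpectralSet p n A := by
  haveI : NeZero p := ⟨hp.ne_zero⟩
  haveI : NeZero (p ^ n) := ⟨pow_ne_zero n hp.ne_zero⟩
  haveI : Fact p.Prime := ⟨hp⟩
  obtain ⟨g, hg, hz⟩ := exists_chiSum_zero p n hp hn A hA hcard
  -- order facts
  have horder : ∀ j : ℕ, ¬ p ∣ j → j • g ≠ 0 := by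
    intro j hj hzero
    apply hg
    have h1 : j • g.1 = 0 := by rw [← nsmul_fst, hzero]; rfl
    have h2 : j • g.2 = 0 := by rw [← nsmul_snd, hzero]; rfl
    rw [nsmul_eq_mul] at h1 h2
    have hu1 : (j : ZMod p) ≠ 0 := fun e => hj ((ZMod.natCast_eq_zero_iff j p).mp e)
    have hg1 : g.1 = 0 := (mul_eq_zero.mp h1).resolve_left hu1
    have hu2 : IsUnit (j : ZMod (p ^ n)) :=
      (ZMod.isUnit_iff_coprime j (p ^ n)).mpr
        (Nat.Coprime.pow_right _ ((hp.coprime_iff_not_dvd.mpr hj).symm))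
    have hg2 : g.2 = 0 := (hu2.mul_right_eq_zero).mp h2
    exact Prod.ext hg1 hg2
  have hpng : (p ^ n) • g = (0 : ZMod p × ZMod (p ^ n)) := by
    apply Prod.ext
    · rw [nsmul_fst, nsmul_eq_mul,
        (ZMod.natCast_eq_zero_iff (p ^ n) p).mpr
          (dvd_pow_self p (by omega : n ≠ 0)), zero_mul]
      rfl
    · rw [nsmul_snd, nsmul_eq_mul, ZMod.natCast_self, zero_mul]
      rfl
  have key : ∀ k k' : ℕ, k < k' → k' < p → k • g = k' • g → False := by
    intro k k' hlt hk' he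
    have hsum : (k' - k) • g + k • g = k' • g := by
      rw [← add_nsmul, Nat.sub_add_cancel hlt.le]
    have h0 : (k' - k) • g = 0 := by
      have h2 : (k' - k) • g + k • g = 0 + k • g := by
        rw [zero_add]; exact hsum.trans he.symm
      exact add_right_cancel h2
    exact horder (k' - k)
      (Nat.not_dvd_of_pos_of_lt (Nat.sub_pos_of_lt hlt)
        (lt_of_le_of_lt (Nat.sub_le _ _) hk')) h0
  refine ⟨Finset.image (fun k => k • g) (Finset.range p), ?_, ?_⟩
  · -- cardinality
    have hinj : Set.InjOn (fun k : ℕ => k • g) (Finset.range p : Set ℕ) := by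
      intro k hk k' hk' he
      simp only [Finset.coe_range, Set.mem_Iio] at hk hk'
      by_contra hne
      rcases Nat.lt_or_ge k k' with h | h
      · exact key k k' h hk' he
      · exact key k' k (lt_of_le_of_ne h (Ne.symm hne)) hk he.symm
    rw [Finset.card_image_of_injOn hinj, Finset.card_range, hcard]
  · -- spectrum property
    intro b hb b' hb' hne
    obtain ⟨k, hk, rfl⟩ := Finset.mem_image.mp hb
    obtain ⟨k', hk', rfl⟩ := Finset.mem_image.mp hb'
    have hkk : k ≠ k' := fun e => hne (by rw [e])
    have hkp := Finset.mem_range.mp hk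
    have hk'p := Finset.mem_range.mp hk'
    have hk'le : k' ≤ p ^ n := le_trans hk'p.le (Nat.le_self_pow (by omega) p)
    set m := k + (p ^ n - k') with hm
    have hsub : (p ^ n - k') • g = -(k' • g) := by
      have hzero : (p ^ n - k') • g + k' • g = 0 := by
        rw [← add_nsmul, Nat.sub_add_cancel hk'le, hpng]
      exact eq_neg_of_add_eq_zero_left hzero
    have hdiff : k • g - k' • g = m • g := by
      rw [hm, add_nsmul, hsub, sub_eq_add_neg]
    rw [hdiff]
    apply chiSum_nsmul_eq_zero p n hp hn A g hz m
    intro hdvd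
    apply hkk
    have ecast : ((k : ZMod p)) = (k' : ZMod p) := by
      have e : ((m + k' : ℕ) : ZMod p) = ((k + p ^ n : ℕ) : ZMod p) := by
        congr 1
        omega
      push_cast at e
      rw [(ZMod.natCast_eq_zero_iff m p).mpr hdvd] at e
      rw [show ((p : ZMod p)) ^ n = 0 by
        rw [ZMod.natCast_self, zero_pow (by omega : n ≠ 0)]] at e
      simpa using e.symm
    rw [← ZMod.val_cast_of_lt hkp, ← ZMod.val_cast_of_lt hk'p, ecast]
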